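/- arXiv:1007.0918 — 2 statements merged into one kernel-verified Lean document; each statement's English description precedes it below -/
import Mathlib

section
/- Let P, P' : H → O be functions on a finite nonempty set H such that for every probability distribution p on H, the Shannon entropy of the pushforward of p along P is at most that along P'. Then the number of equivalence classes of the kernel relation ≃_P is at most the number of equivalence classes of ≃_{P'}. -/
open Real Finset

lemma max_ent {O : Type} [Fintype O] [DecidableEq O] (S : Finset O) (hS : S.Nonempty)
    (q : O → ℝ) (hq0 : ∀ o, 0 ≤ q o) (hout : ∀ o ∉ S, q o = 0)
    (hsum : ∑ o, q o = 1) :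
    -(∑ o, q o * Real.log (q o)) ≤ Real.log S.card := by
  have hm : (0:ℝ) < S.card := Nat.cast_pos.mpr (Finset.card_pos.mpr hS)
  have hsumS : ∑ o ∈ S, q o = 1 := by
    rw [← hsum]; exact Finset.sum_subset S.subset_univ (fun o _ ho => hout o ho)
  have jensen := Real.concaveOn_negMulLog.le_map_sum (t := S)
    (w := fun _ => (S.card : ℝ)⁻¹) (p := fun o => S.card * q o)
    (fun i _ => by positivity)
    (by rw [Finset.sum_const, nsmul_eq_mul, mul_inv_cancel₀ hm.ne'])
    (fun i _ => Set.mem_Ici.mpr (by have := hq0 i; positivity))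
  simp only [smul_eq_mul] at jensen
  have hpt : ∑ o ∈ S, (S.card : ℝ)⁻¹ * ((S.card : ℝ) * q o) = 1 := by
    rw [← Finset.mul_sum, ← Finset.mul_sum, hsumS, mul_one, inv_mul_cancel₀ hm.ne']
  rw [hpt, Real.negMulLog_one] at jensen
  have hexp : ∀ o ∈ S, (S.card : ℝ)⁻¹ * Real.negMulLog ((S.card : ℝ) * q o)
      = Real.negMulLog (q o) - q o * Real.log S.card := by
    intro o _
    rw [Real.negMulLog_mul]
    field_simp [Real.negMulLog]
    simp only [Real.negMulLog]
    ring
  rw [Finset.sum_congr rfl hexp, Finset.sum_sub_distrib, ← Finset.sum_mul, hsumS, one_mul,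
    sub_nonpos] at jensen
  calc -(∑ o, q o * Real.log (q o)) = ∑ o, Real.negMulLog (q o) := by
        simp [Real.negMulLog, Finset.sum_neg_distrib]
    _ = ∑ o ∈ S, Real.negMulLog (q o) := by
        refine (Finset.sum_subset S.subset_univ (fun o _ ho => ?_)).symm
        simp [hout o ho]
    _ ≤ Real.log S.card := jensen

/-- If for every distribution on `H` the entropy of the pushforward along `P`
is at most that along `P'`, then the number of equivalence classes of the
kernel relation of `P` is at most that of `P'`. -/
theorem classes_le_of_entropy_le {H O : Type} [Fintype H] [Nonempty H]
    [Fintype O] [DecidableEq O] (P P' : H → O)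
    (hent : ∀ p : H → ℝ, (∀ h, 0 ≤ p h) → ∑ h, p h = 1 →
      -(∑ o, (∑ h ∈ Finset.univ.filter (fun h => P h = o), p h) *
          Real.logb 2 (∑ h ∈ Finset.univ.filter (fun h => P h = o), p h))
        ≤
      -(∑ o, (∑ h ∈ Finset.univ.filter (fun h => P' h = o), p h) *
          Real.logb 2 (∑ h ∈ Finset.univ.filter (fun h => P' h = o), p h))) :
    Fintype.card (Set.range P) ≤ Fintype.card (Set.range P') := by
  classical
  set S : Finset O := Finset.univ.image P with hSdef
  set T : Finset O := Finset.univ.image P' with hTdef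
  have hcardS : Fintype.card (Set.range P) = S.card := by
    rw [← Set.toFinset_card, Set.toFinset_range]
  have hcardT : Fintype.card (Set.range P') = T.card := by
    rw [← Set.toFinset_card, Set.toFinset_range]
  rw [hcardS, hcardT]
  set n : ℕ := S.card with hn
  have hSne : S.Nonempty := Finset.image_nonempty.mpr Finset.univ_nonempty
  have hTne : T.Nonempty := Finset.image_nonempty.mpr Finset.univ_nonempty
  have hn0 : (0:ℝ) < n := Nat.cast_pos.mpr (Finset.card_pos.mpr hSne)
  set p : H → ℝ := fun h => ((n : ℝ) * (Finset.univ.filter (fun h' => P h' = P h)).card)⁻¹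
    with hp
  have hfibcard : ∀ h : H, 0 < (Finset.univ.filter (fun h' => P h' = P h)).card := by
    intro h
    exact Finset.card_pos.mpr ⟨h, by simp⟩
  have hp0 : ∀ h, 0 ≤ p h := fun h => by positivity
  have hfib : ∀ o ∈ S, ∑ h ∈ Finset.univ.filter (fun h => P h = o), p h = (n:ℝ)⁻¹ := by
    intro o ho
    have he : ∀ h ∈ Finset.univ.filter (fun h => P h = o),
        p h = ((n : ℝ) * (Finset.univ.filter (fun h' => P h' = o)).card)⁻¹ := by
      intro h hh
      simp only [Finset.mem_filter] at hh
      simp [hp, hh.2]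
    rw [Finset.sum_congr rfl he, Finset.sum_const, nsmul_eq_mul]
    obtain ⟨h0, _, hh0⟩ := Finset.mem_image.mp ho
    have hcpos : (0:ℝ) < (Finset.univ.filter (fun h' => P h' = o)).card :=
      Nat.cast_pos.mpr (Finset.card_pos.mpr ⟨h0, by simp [hh0]⟩)
    field_simp
  have hfib0 : ∀ o ∉ S, ∑ h ∈ Finset.univ.filter (fun h => P h = o), p h = 0 := by
    intro o ho
    have : Finset.univ.filter (fun h => P h = o) = ∅ := by
      rw [Finset.filter_eq_empty_iff]
      intro h _ heq
      exact ho (Finset.mem_image.mpr ⟨h, Finset.mem_univ h, heq⟩)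
    simp [this]
  have hpsum : ∑ h, p h = 1 := by
    rw [← Finset.sum_fiberwise_of_maps_to (g := P) (t := (Finset.univ : Finset O))
      (fun x _ => Finset.mem_univ _)]
    rw [← Finset.sum_subset S.subset_univ (fun o _ ho => hfib0 o ho),
      Finset.sum_congr rfl hfib, Finset.sum_const, nsmul_eq_mul, ← hn,
      mul_inv_cancel₀ hn0.ne']
  -- entropy of P-pushforward is logb 2 n
  have hEP : -(∑ o, (∑ h ∈ Finset.univ.filter (fun h => P h = o), p h) *
      Real.logb 2 (∑ h ∈ Finset.univ.filter (fun h => P h = o), p h)) = Real.logb 2 n := by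
    rw [← Finset.sum_subset S.subset_univ (fun o _ ho => by simp [hfib0 o ho])]
    rw [Finset.sum_congr rfl (fun o ho => by rw [hfib o ho]), Finset.sum_const, nsmul_eq_mul,
      ← hn, Real.logb_inv]
    field_simp
  -- entropy of P'-pushforward is at most logb 2 T.card
  set q : O → ℝ := fun o => ∑ h ∈ Finset.univ.filter (fun h => P' h = o), p h with hq
  have hq0 : ∀ o, 0 ≤ q o := fun o => Finset.sum_nonneg (fun h _ => hp0 h)
  have hqout : ∀ o ∉ T, q o = 0 := by
    intro o ho
    have : Finset.univ.filter (fun h => P' h = o) = ∅ := by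
      rw [Finset.filter_eq_empty_iff]
      intro h _ heq
      exact ho (Finset.mem_image.mpr ⟨h, Finset.mem_univ h, heq⟩)
    simp [hq, this]
  have hqsum : ∑ o, q o = 1 := by
    rw [hq, Finset.sum_fiberwise_of_maps_to (fun x _ => Finset.mem_univ _), hpsum]
  have hmax := max_ent T hTne q hq0 hqout hqsum
  have hlog2 : (0:ℝ) < Real.log 2 := Real.log_pos one_lt_two
  have hEP' : -(∑ o, q o * Real.logb 2 (q o)) ≤ Real.logb 2 T.card := by
    have : -(∑ o, q o * Real.logb 2 (q o)) = -(∑ o, q o * Real.log (q o)) / Real.log 2 := by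
      rw [neg_div, Finset.sum_div]
      congr 1
      exact Finset.sum_congr rfl (fun o _ => by rw [Real.logb, mul_div_assoc])
    rw [this, Real.logb]
    exact div_le_div_of_nonneg_right hmax hlog2.le
  have key : Real.logb 2 n ≤ Real.logb 2 T.card := by
    calc Real.logb 2 n
        = -(∑ o, (∑ h ∈ Finset.univ.filter (fun h => P h = o), p h) *
            Real.logb 2 (∑ h ∈ Finset.univ.filter (fun h => P h = o), p h)) := hEP.symm
      _ ≤ -(∑ o, q o * Real.logb 2 (q o)) := hent p hp0 hpsum
      _ ≤ Real.logb 2 T.card := hEP'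
  by_contra hlt
  push_neg at hlt
  have : Real.logb 2 T.card < Real.logb 2 n := by
    apply Real.logb_lt_logb one_lt_two
    · exact Nat.cast_pos.mpr (Finset.card_pos.mpr hTne)
    · exact_mod_cast hlt
  linarith
end

section
/- For functions P, P' : H → O on a finite set H with a fixed positive probability distribution, the kernel relation of P is refined by the kernel relation of P' (i.e., ≃_{P'} ⊑-above ≃_P in the lattice of information: h ≃_{P'} h' implies h ≃_P h') for all pairs if and only if for every probability distribution on H the entropy of the pushforward along P is at most the entropy of the pushforward along P'. -/
open Finset Real

private lemma aux_sum_mul_logb {ι : Type} (s : Finset ι) (q : ι → ℝ)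
    (hq : ∀ i ∈ s, 0 ≤ q i) :
    ∑ i ∈ s, q i * Real.logb 2 (q i) ≤ (∑ i ∈ s, q i) * Real.logb 2 (∑ i ∈ s, q i) := by
  rw [Finset.sum_mul]
  apply Finset.sum_le_sum
  intro i hi
  rcases eq_or_lt_of_le (hq i hi) with h0 | h0
  · simp [← h0]
  · apply mul_le_mul_of_nonneg_left _ (hq i hi)
    exact Real.logb_le_logb_of_le one_lt_two h0
      (Finset.single_le_sum hq hi)

/-- Lattice-of-information order vs. entropy order: the kernel relation of `P'`
refines that of `P` (i.e. `≃_P ⊑ ≃_{P'}`: `P' h = P' h' → P h = P h'`) iff for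
every probability distribution on `H` the entropy of the pushforward along `P`
is at most the entropy of the pushforward along `P'`. -/
theorem loi_order_iff_entropy_le {H O : Type} [Fintype H] [Nonempty H]
    [Fintype O] [DecidableEq O] (P P' : H → O) :
    (∀ h h' : H, P' h = P' h' → P h = P h') ↔
      (∀ p : H → ℝ, (∀ h, 0 ≤ p h) → ∑ h, p h = 1 →
        -(∑ o, (∑ h ∈ Finset.univ.filter (fun h => P h = o), p h) *
            Real.logb 2 (∑ h ∈ Finset.univ.filter (fun h => P h = o), p h))
          ≤
        -(∑ o, (∑ h ∈ Finset.univ.filter (fun h => P' h = o), p h) *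
            Real.logb 2 (∑ h ∈ Finset.univ.filter (fun h => P' h = o), p h))) := by
  classical
  constructor
  · intro hPP' p hp _
    obtain ⟨h0⟩ := (inferInstance : Nonempty H)
    set q : O → ℝ := fun o' => ∑ h ∈ univ.filter (fun h => P' h = o'), p h with hq
    have hqnn : ∀ o', 0 ≤ q o' := fun o' => Finset.sum_nonneg fun h _ => hp h
    set f : O → O := fun o' => if hx : ∃ h, P' h = o' then P hx.choose else P h0 with hf
    have hfib : ∀ h : H, f (P' h) = P h := by
      intro h
      have hx : ∃ h', P' h' = P' h := ⟨h, rfl⟩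
      simp only [hf, dif_pos hx]
      exact hPP' _ _ hx.choose_spec
    have key : ∀ o, (∑ h ∈ univ.filter (fun h => P h = o), p h)
        = ∑ o' ∈ univ.filter (fun o' => f o' = o), q o' := by
      intro o
      rw [hq]
      rw [Finset.sum_fiberwise_eq_sum_filter univ (univ.filter (fun o' => f o' = o)) P' p]
      apply Finset.sum_congr _ (fun _ _ => rfl)
      ext h
      simp [hfib h]
    have expand : (∑ o', q o' * Real.logb 2 (q o'))
        = ∑ o, ∑ o' ∈ univ.filter (fun o' => f o' = o), q o' * Real.logb 2 (q o') :=
      (Finset.sum_fiberwise univ f _).symm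
    rw [neg_le_neg_iff]
    calc (∑ o', (∑ h ∈ univ.filter (fun h => P' h = o'), p h) *
            Real.logb 2 (∑ h ∈ univ.filter (fun h => P' h = o'), p h))
          = ∑ o, ∑ o' ∈ univ.filter (fun o' => f o' = o), q o' * Real.logb 2 (q o') :=
          expand
      _ ≤ ∑ o, (∑ o' ∈ univ.filter (fun o' => f o' = o), q o') *
            Real.logb 2 (∑ o' ∈ univ.filter (fun o' => f o' = o), q o') :=
          Finset.sum_le_sum fun o _ => aux_sum_mul_logb _ _ fun o' _ => hqnn o'
      _ = ∑ o, (∑ h ∈ univ.filter (fun h => P h = o), p h) *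
            Real.logb 2 (∑ h ∈ univ.filter (fun h => P h = o), p h) := by
          exact Finset.sum_congr rfl fun o _ => by rw [key o]
  · intro hEnt h h' hP'
    by_contra hP
    have hne : h ≠ h' := fun e => hP (e ▸ rfl)
    set p : H → ℝ := fun x => (if x = h then (1:ℝ)/2 else 0) + (if x = h' then (1:ℝ)/2 else 0)
      with hpdef
    have hpnn : ∀ x, 0 ≤ p x := by
      intro x
      have : (0:ℝ) ≤ (if x = h then (1:ℝ)/2 else 0) := by positivity
      have : (0:ℝ) ≤ (if x = h' then (1:ℝ)/2 else 0) := by positivity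
      simp only [hpdef]
      positivity
    have hpsum : ∑ x, p x = 1 := by
      simp [hpdef, Finset.sum_add_distrib, Finset.sum_ite_eq']
      norm_num
    have hmass : ∀ (Q : H → O) (o : O), (∑ x ∈ univ.filter (fun x => Q x = o), p x)
        = (if Q h = o then (1:ℝ)/2 else 0) + (if Q h' = o then (1:ℝ)/2 else 0) := by
      intro Q o
      simp only [hpdef, Finset.sum_add_distrib, Finset.sum_ite_eq', Finset.mem_filter,
        Finset.mem_univ, true_and]
    have key := hEnt p hpnn hpsum
    have hlhs : (∑ o, (∑ x ∈ univ.filter (fun x => P x = o), p x) *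
        Real.logb 2 (∑ x ∈ univ.filter (fun x => P x = o), p x)) = Real.logb 2 ((1:ℝ)/2) := by
      have : ∀ o : O, (∑ x ∈ univ.filter (fun x => P x = o), p x) *
          Real.logb 2 (∑ x ∈ univ.filter (fun x => P x = o), p x)
          = (if o = P h then (1:ℝ)/2 * Real.logb 2 ((1:ℝ)/2) else 0)
            + (if o = P h' then (1:ℝ)/2 * Real.logb 2 ((1:ℝ)/2) else 0) := by
        intro o
        rw [hmass P o]
        by_cases h1 : P h = o <;> by_cases h2 : P h' = o
        · exact absurd (h1.trans h2.symm) hP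
        · have h1' : o = P h := h1.symm
          have h2' : ¬ o = P h' := fun e => h2 e.symm
          rw [if_pos h1, if_neg h2, if_pos h1', if_neg h2']
          norm_num
        · have h1' : ¬ o = P h := fun e => h1 e.symm
          have h2' : o = P h' := h2.symm
          rw [if_neg h1, if_pos h2, if_neg h1', if_pos h2']
          norm_num
        · have h1' : ¬ o = P h := fun e => h1 e.symm
          have h2' : ¬ o = P h' := fun e => h2 e.symm
          rw [if_neg h1, if_neg h2, if_neg h1', if_neg h2']
          norm_num
      rw [Finset.sum_congr rfl fun o _ => this o, Finset.sum_add_distrib,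
        Finset.sum_ite_eq', Finset.sum_ite_eq']
      simp
      ring
    have hrhs : (∑ o, (∑ x ∈ univ.filter (fun x => P' x = o), p x) *
        Real.logb 2 (∑ x ∈ univ.filter (fun x => P' x = o), p x)) = 0 := by
      apply Finset.sum_eq_zero
      intro o _
      rw [hmass P' o, ← hP']
      by_cases h1 : P' h = o
      · simp [h1]
        norm_num
      · simp [h1]
    rw [hlhs, hrhs] at key
    have : Real.logb 2 ((1:ℝ)/2) = -1 := by
      rw [one_div, Real.logb_inv, Real.logb_self_eq_one] <;> norm_num

    rw [this] at key
    norm_num at key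
end
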